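/- Assume the field hypotheses. Let f be a continuous real-valued function defined on [a, b] ∪ [1/b, 1/a] such that f(x)·f(1/x) ≤ 1 for all x ∈ [a, b], and suppose that either f([a, b]) ⊆ [a, b] or f([a, b]) ⊆ [1/b, 1/a]. Then (∫_Ω W_t^{1/2} f(A_t) W_t^{1/2} dμ(t)) ⊗_s (∫_Ω W_t^{1/2} f(A_t⁻¹) W_t^{1/2} dμ(t)) ≤ ((a² + b²)/(2ab)) · (∫_Ω W_t dμ(t))^{⊗2}, where f(A_t) and f(A_t⁻¹) are defined by the functional calculus for Hermitian matrices (the spectrum of A_t lies in [a, b] and that of A_t⁻¹ in [1/b, 1/a]). -/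

import Mathlib

open Matrix MeasureTheory
open scoped Kronecker ComplexOrder

attribute [local instance] Matrix.frobeniusNormedAddCommGroup Matrix.frobeniusNormedSpace

@[reducible] noncomputable def matCENorm {m n : Type*} [Fintype m] [Fintype n] :
    ContinuousENorm (Matrix m n ℂ) := SeminormedAddGroup.toContinuousENorm

@[reducible] noncomputable def matPMS {m n : Type*} [Fintype m] [Fintype n] :
    TopologicalSpace.PseudoMetrizableSpace (Matrix m n ℂ) :=
  (inferInstance : TopologicalSpace.PseudoMetrizableSpace (m → n → ℂ))

attribute [local instance] matCENorm matPMS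

/-- Symmetrized Kronecker tensor product: `X ⊗ₛ Y = (1/2)(X ⊗ Y + Y ⊗ X)`. -/
noncomputable def symKron {k : ℕ} (X Y : Matrix (Fin k) (Fin k) ℂ) :
    Matrix (Fin k × Fin k) (Fin k × Fin k) ℂ :=
  ((1 : ℂ) / 2) • (X ⊗ₖ Y + Y ⊗ₖ X)

/-- The positive semidefinite square root of a positive semidefinite matrix
(the definition `Matrix.PosSemidef.sqrt` of the older Mathlib, since removed). -/
noncomputable def Matrix.PosSemidef.sqrt {n : Type*} {𝕜 : Type*} [Fintype n] [DecidableEq n]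
    [RCLike 𝕜] {A : Matrix n n 𝕜} (hA : A.PosSemidef) : Matrix n n 𝕜 :=
  hA.1.eigenvectorUnitary.1 * diagonal ((↑) ∘ (√·) ∘ hA.1.eigenvalues) *
  (star hA.1.eigenvectorUnitary : Matrix n n 𝕜)

lemma Matrix.PosSemidef.posSemidef_sqrt {n : Type*} {𝕜 : Type*} [Fintype n] [DecidableEq n]
    [RCLike 𝕜] {A : Matrix n n 𝕜} (hA : A.PosSemidef) : hA.sqrt.PosSemidef := by
  unfold Matrix.PosSemidef.sqrt
  rw [Matrix.star_eq_conjTranspose]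
  refine Matrix.PosSemidef.mul_mul_conjTranspose_same
    (Matrix.PosSemidef.diagonal (Pi.le_def.mpr fun i => ?_)) _
  simp [Real.sqrt_nonneg]

lemma Matrix.PosSemidef.sqrt_mul_self {n : Type*} {𝕜 : Type*} [Fintype n] [DecidableEq n]
    [RCLike 𝕜] {A : Matrix n n 𝕜} (hA : A.PosSemidef) : hA.sqrt * hA.sqrt = A := by
  unfold Matrix.PosSemidef.sqrt
  conv_rhs => rw [hA.1.spectral_theorem, Unitary.conjStarAlgAut_apply]
  have hu := Unitary.star_mul_self_of_mem hA.1.eigenvectorUnitary.2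
  set U : Matrix n n 𝕜 := (hA.1.eigenvectorUnitary : Matrix n n 𝕜) with hU
  have hd : (diagonal ((↑) ∘ (√·) ∘ hA.1.eigenvalues) : Matrix n n 𝕜) *
      diagonal ((↑) ∘ (√·) ∘ hA.1.eigenvalues) = diagonal (RCLike.ofReal ∘ hA.1.eigenvalues) := by
    rw [diagonal_mul_diagonal]
    congr 1
    funext i
    simp only [Function.comp_apply]
    rw [← RCLike.ofReal_mul, Real.mul_self_sqrt (hA.eigenvalues_nonneg i)]
  rw [← hd]
  calc _ = U * (diagonal ((↑) ∘ (√·) ∘ hA.1.eigenvalues) * (star U * U) *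
      diagonal ((↑) ∘ (√·) ∘ hA.1.eigenvalues)) * star U := by simp only [mul_assoc]
    _ = _ := by rw [hu, mul_one]

section Helpers

variable {k : ℕ}

local notation "Mk" => Matrix (Fin k) (Fin k) ℂ

lemma continuousOn_of_finite {s : Set ℝ} (hs : s.Finite) (g : ℝ → ℝ) :
    ContinuousOn g s := by
  have : Finite s := hs.to_subtype
  rw [continuousOn_iff_continuous_restrict]
  exact continuous_of_discreteTopology

lemma continuousOn_spectrum (g : ℝ → ℝ) (A : Mk) :
    ContinuousOn g (spectrum ℝ A) :=
  continuousOn_of_finite (Matrix.finite_real_spectrum (A := A)) g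

lemma continuousOn_spectrum_image (g : ℝ → ℝ) (A : Mk) (h : ℝ → ℝ) :
    ContinuousOn g (h '' spectrum ℝ A) :=
  continuousOn_of_finite ((Matrix.finite_real_spectrum (A := A)).image h) g

lemma real_smul_matrix {m : Type*} (r : ℝ) (M : Matrix m m ℂ) :
    r • M = (r : ℂ) • M := by
  ext i j
  simp [Matrix.smul_apply, Complex.real_smul]

lemma posSemidef_smul_real {m : Type*} [Fintype m] {M : Matrix m m ℂ} {r : ℝ}
    (hr : 0 ≤ r) (hM : M.PosSemidef) : (r • M).PosSemidef := by
  rw [posSemidef_iff_dotProduct_mulVec]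
  constructor
  · have h := hM.isHermitian
    ext i j
    simp only [conjTranspose_apply, Matrix.smul_apply, star_smul, star_trivial]
    rw [← conjTranspose_apply, h]
  · intro x
    have h2 := hM.dotProduct_mulVec_nonneg x
    rw [real_smul_matrix, smul_mulVec, dotProduct_smul]
    exact mul_nonneg (by exact_mod_cast Complex.zero_le_real.mpr hr) h2

lemma kron_conjTranspose {m n : Type*} (A : Matrix m m ℂ) (B : Matrix n n ℂ) :
    (A ⊗ₖ B)ᴴ = Aᴴ ⊗ₖ Bᴴ := by
  ext ⟨i, j⟩ ⟨p, q⟩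
  simp [conjTranspose_apply, kroneckerMap_apply, mul_comm]

lemma PosSemidef.kron {m n : Type*} [Fintype m] [Fintype n] [DecidableEq m] [DecidableEq n]
    {A : Matrix m m ℂ} {B : Matrix n n ℂ}
    (hA : A.PosSemidef) (hB : B.PosSemidef) : (A ⊗ₖ B).PosSemidef := by
  exact hA.kronecker hB

end Helpers
section Norms

variable {k : ℕ}

local notation "Mk" => Matrix (Fin k) (Fin k) ℂ

lemma rpow_two_eq (x : ℝ) : x ^ (2:ℝ) = x ^ 2 := by
  rw [show (2:ℝ) = ((2:ℕ):ℝ) by norm_num, Real.rpow_natCast]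

lemma frob_norm_eq_sqrt (M : Mk) : ‖M‖ = Real.sqrt (∑ i, ∑ j, ‖M i j‖ ^ 2) := by
  rw [Matrix.frobenius_norm_def, Real.sqrt_eq_rpow]
  congr 1
  refine Finset.sum_congr rfl fun i _ => Finset.sum_congr rfl fun j _ => ?_
  exact rpow_two_eq _

lemma entry_norm_le_frobenius (M : Mk) (i j : Fin k) : ‖M i j‖ ≤ ‖M‖ := by
  rw [frob_norm_eq_sqrt]
  rw [show ‖M i j‖ = Real.sqrt (‖M i j‖ ^ 2) by
    rw [Real.sqrt_sq (norm_nonneg _)]]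
  apply Real.sqrt_le_sqrt
  calc ‖M i j‖ ^ 2 ≤ ∑ j', ‖M i j'‖ ^ 2 :=
        Finset.single_le_sum (f := fun j' => ‖M i j'‖ ^ 2)
          (fun _ _ => sq_nonneg _) (Finset.mem_univ j)
    _ ≤ _ :=
        Finset.single_le_sum (f := fun i' => ∑ j', ‖M i' j'‖ ^ 2)
          (fun _ _ => Finset.sum_nonneg fun _ _ => sq_nonneg _) (Finset.mem_univ i)

lemma frob_norm_le_of_entries {M : Mk} {m : ℝ} (hm : 0 ≤ m) (h : ∀ i j, ‖M i j‖ ≤ m) :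
    ‖M‖ ≤ k * m := by
  rw [frob_norm_eq_sqrt]
  have hb : (∑ i, ∑ j, ‖M i j‖ ^ 2) ≤ ∑ _i : Fin k, ∑ _j : Fin k, m ^ 2 := by
    refine Finset.sum_le_sum fun i _ => Finset.sum_le_sum fun j _ => ?_
    exact pow_le_pow_left₀ (norm_nonneg _) (h i j) 2
  calc Real.sqrt (∑ i, ∑ j, ‖M i j‖ ^ 2) ≤ Real.sqrt (∑ _i : Fin k, ∑ _j : Fin k, m ^ 2) :=
        Real.sqrt_le_sqrt hb
    _ = Real.sqrt ((k * m)^2) := by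
        rw [Finset.sum_const, Finset.sum_const]
        congr 1
        simp [Finset.card_univ]
        ring
    _ = k * m := Real.sqrt_sq (by positivity)

lemma unitary_row_sum {U : Mk} (hU : U * Uᴴ = 1) (i : Fin k) :
    ∑ j, ‖U i j‖ ^ 2 = 1 := by
  have h := congrFun (congrFun (congrArg (fun M => (M : Mk)) hU) i) i
  simp only [Matrix.mul_apply, Matrix.conjTranspose_apply, Matrix.one_apply_eq] at h
  have : ∑ j, (U i j * star (U i j)) = (1 : ℂ) := h
  have h2 : ((∑ j, ‖U i j‖ ^ 2 : ℝ) : ℂ) = 1 := by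
    rw [Complex.ofReal_sum]
    rw [← this]
    refine Finset.sum_congr rfl fun j _ => ?_
    have hs : star (U i j) = (starRingEnd ℂ) (U i j) := rfl
    rw [hs, Complex.mul_conj, Complex.sq_norm]
  exact_mod_cast h2

lemma unitary_entry_le {U : Mk} (hU : U * Uᴴ = 1) (i j : Fin k) : ‖U i j‖ ≤ 1 := by
  have h := unitary_row_sum hU i
  have h1 : ‖U i j‖ ^ 2 ≤ 1 := by
    rw [← h]
    exact Finset.single_le_sum (f := fun j' => ‖U i j'‖ ^ 2)
      (fun _ _ => sq_nonneg _) (Finset.mem_univ j)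
  nlinarith [norm_nonneg (U i j)]

lemma norm_unitary_le {U : Mk} (hU : U * Uᴴ = 1) : ‖U‖ ≤ k := by
  have := frob_norm_le_of_entries zero_le_one (unitary_entry_le hU)
  rwa [mul_one] at this

lemma norm_unitary_conjTranspose_le {U : Mk} (hU : U * Uᴴ = 1) : ‖Uᴴ‖ ≤ k := by
  have := frob_norm_le_of_entries (M := Uᴴ) zero_le_one (fun i j => by
    rw [Matrix.conjTranspose_apply, norm_star]
    exact unitary_entry_le hU j i)
  rwa [mul_one] at this

lemma norm_conj_diag_le {U : Mk} (hU : U * Uᴴ = 1) {d : Fin k → ℂ} {m : ℝ}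
    (hm : 0 ≤ m) (hd : ∀ i, ‖d i‖ ≤ m) :
    ‖U * Matrix.diagonal d * Uᴴ‖ ≤ (k:ℝ) * k * (k * m) := by
  have hdiag : ‖(Matrix.diagonal d : Mk)‖ ≤ k * m := by
    refine frob_norm_le_of_entries hm fun i j => ?_
    by_cases hij : i = j
    · subst hij; simpa [Matrix.diagonal_apply_eq] using hd i
    · simp [Matrix.diagonal_apply_ne _ hij, hm]
  have h1 : ‖U * Matrix.diagonal d * Uᴴ‖ ≤ ‖U * Matrix.diagonal d‖ * ‖Uᴴ‖ :=
    Matrix.frobenius_norm_mul _ _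
  have h2 : ‖U * Matrix.diagonal d‖ ≤ ‖U‖ * ‖Matrix.diagonal d‖ :=
    Matrix.frobenius_norm_mul _ _
  have h3 := norm_unitary_le hU
  have h4 := norm_unitary_conjTranspose_le hU
  calc ‖U * Matrix.diagonal d * Uᴴ‖ ≤ ‖U * Matrix.diagonal d‖ * ‖Uᴴ‖ := h1
    _ ≤ (‖U‖ * ‖(Matrix.diagonal d : Mk)‖) * ‖Uᴴ‖ :=
        mul_le_mul_of_nonneg_right h2 (norm_nonneg _)
    _ ≤ ((k:ℝ) * (k * m)) * k := by
        have h5 : ‖U‖ * ‖(Matrix.diagonal d : Mk)‖ ≤ (k:ℝ) * (k * m) :=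
          mul_le_mul h3 hdiag (norm_nonneg _) (Nat.cast_nonneg k)
        exact mul_le_mul h5 h4 (norm_nonneg _) (by positivity)
    _ = (k:ℝ) * k * (k * m) := by ring

end Norms
section Eig

variable {k : ℕ}

variable {A : Matrix (Fin k) (Fin k) ℂ} (hA : A.IsHermitian)

lemma eigbasis_dot (i : Fin k) :
    dotProduct (star ⇑(hA.eigenvectorBasis i)) ⇑(hA.eigenvectorBasis i) = 1 := by
  have h1 : (inner ℂ (hA.eigenvectorBasis i) (hA.eigenvectorBasis i) : ℂ) = 1 := by
    rw [inner_self_eq_norm_sq_to_K, hA.eigenvectorBasis.orthonormal.1 i]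
    norm_num
  exact (dotProduct_comm _ _).trans ((EuclideanSpace.inner_eq_star_dotProduct _ _).symm.trans h1)

lemma eig_quadform (i : Fin k) :
    dotProduct (star ⇑(hA.eigenvectorBasis i)) (A *ᵥ ⇑(hA.eigenvectorBasis i))
      = (hA.eigenvalues i : ℂ) := by
  rw [hA.mulVec_eigenvectorBasis, dotProduct_smul, eigbasis_dot hA i]
  simp [Complex.real_smul]

lemma eig_ge {r : ℝ} (h : (A - r • (1 : Matrix (Fin k) (Fin k) ℂ)).PosSemidef) (i : Fin k) :
    r ≤ hA.eigenvalues i := by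
  have h2 := h.dotProduct_mulVec_nonneg (⇑(hA.eigenvectorBasis i))
  rw [Matrix.sub_mulVec, dotProduct_sub, eig_quadform hA i,
    Matrix.smul_mulVec, Matrix.one_mulVec, dotProduct_smul,
    eigbasis_dot hA i] at h2
  have h4 : (0:ℂ) ≤ ((hA.eigenvalues i - r : ℝ) : ℂ) := by
    convert h2 using 1
    push_cast
    simp [Complex.real_smul]
  have := Complex.zero_le_real.mp h4
  linarith

lemma eig_le {r : ℝ} (h : (r • (1 : Matrix (Fin k) (Fin k) ℂ) - A).PosSemidef) (i : Fin k) :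
    hA.eigenvalues i ≤ r := by
  have h2 := h.dotProduct_mulVec_nonneg (⇑(hA.eigenvectorBasis i))
  rw [Matrix.sub_mulVec, dotProduct_sub, eig_quadform hA i,
    Matrix.smul_mulVec, Matrix.one_mulVec, dotProduct_smul,
    eigbasis_dot hA i] at h2
  have h4 : (0:ℂ) ≤ ((r - hA.eigenvalues i : ℝ) : ℂ) := by
    convert h2 using 1
    push_cast
    simp [Complex.real_smul]
  have := Complex.zero_le_real.mp h4
  linarith

lemma spectrum_subset_Icc {α β : ℝ} (hlo : ∀ i, α ≤ hA.eigenvalues i)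
    (hhi : ∀ i, hA.eigenvalues i ≤ β) : spectrum ℝ A ⊆ Set.Icc α β := by
  rw [hA.spectrum_real_eq_range_eigenvalues]
  rintro x ⟨i, rfl⟩
  exact ⟨hlo i, hhi i⟩

lemma eigU_mul_conjT :
    (hA.eigenvectorUnitary : Matrix (Fin k) (Fin k) ℂ) * (hA.eigenvectorUnitary : Matrix (Fin k) (Fin k) ℂ)ᴴ = 1 := by
  rw [← Matrix.star_eq_conjTranspose]
  exact (Matrix.mem_unitaryGroup_iff).mp (hA.eigenvectorUnitary).2

lemma eigU_conjT_mul :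
    (hA.eigenvectorUnitary : Matrix (Fin k) (Fin k) ℂ)ᴴ * (hA.eigenvectorUnitary : Matrix (Fin k) (Fin k) ℂ) = 1 := by
  rw [← Matrix.star_eq_conjTranspose]
  exact (Matrix.mem_unitaryGroup_iff').mp (hA.eigenvectorUnitary).2

lemma sum_eigenvalues_eq_retrace : ∑ i, hA.eigenvalues i = (A.trace).re := by
  have h1 : A.trace = (Matrix.diagonal ((↑) ∘ hA.eigenvalues) : Matrix (Fin k) (Fin k) ℂ).trace := by
    conv_lhs => rw [hA.spectral_theorem]
    rw [Unitary.conjStarAlgAut_apply, Matrix.trace_mul_cycle, Unitary.coe_star_mul_self, one_mul]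
    rfl
  rw [h1, Matrix.trace_diagonal]
  rw [show (∑ i, ((↑) ∘ hA.eigenvalues) i : ℂ) = ((∑ i, hA.eigenvalues i : ℝ) : ℂ) by
    push_cast; rfl]
  rw [Complex.ofReal_re]

lemma eig_le_trace_bound {M : Matrix (Fin k) (Fin k) ℂ} (hM : M.PosSemidef) (i : Fin k) :
    hM.1.eigenvalues i ≤ k * ‖M‖ := by
  have h1 : hM.1.eigenvalues i ≤ ∑ j, hM.1.eigenvalues j :=
    Finset.single_le_sum (f := fun j => hM.1.eigenvalues j)
      (fun j _ => hM.eigenvalues_nonneg j) (Finset.mem_univ i)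
  have h2 : (M.trace).re ≤ k * ‖M‖ := by
    rw [Matrix.trace, Complex.re_sum]
    calc ∑ j, (M.diag j).re ≤ ∑ j : Fin k, ‖M‖ := by
          refine Finset.sum_le_sum fun j _ => ?_
          calc (M.diag j).re ≤ ‖M j j‖ := Complex.re_le_norm _
            _ ≤ ‖M‖ := entry_norm_le_frobenius M j j
      _ = k * ‖M‖ := by simp [Finset.card_univ]
  calc hM.1.eigenvalues i ≤ ∑ j, hM.1.eigenvalues j := h1
    _ = (M.trace).re := sum_eigenvalues_eq_retrace hM.1
    _ ≤ k * ‖M‖ := h2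

lemma cfc_repr (g : ℝ → ℝ) :
    cfc g A = (hA.eigenvectorUnitary : Matrix (Fin k) (Fin k) ℂ) *
      Matrix.diagonal (fun i => (g (hA.eigenvalues i) : ℂ)) *
      (hA.eigenvectorUnitary : Matrix (Fin k) (Fin k) ℂ)ᴴ := by
  rw [hA.cfc_eq]
  rfl

lemma isUnit_of_eig_pos (hpos : ∀ i, 0 < hA.eigenvalues i) : IsUnit A := by
  rw [Matrix.isUnit_iff_isUnit_det, hA.det_eq_prod_eigenvalues, isUnit_iff_ne_zero]
  refine Finset.prod_ne_zero_iff.mpr fun i _ => ?_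
  exact Complex.ofReal_ne_zero.mpr (hpos i).ne'

include hA in
lemma cfc_matrix_inv (hu : IsUnit A) (f : ℝ → ℝ) :
    cfc f A⁻¹ = cfc (fun x => f x⁻¹) A := by
  have hsa : IsSelfAdjoint A := hA
  have h1 : (hu.unit : Matrix (Fin k) (Fin k) ℂ) = A := hu.unit_spec
  have h2 : ((hu.unit⁻¹ : (Matrix (Fin k) (Fin k) ℂ)ˣ) : Matrix (Fin k) (Fin k) ℂ) = A⁻¹ := by
    rw [Matrix.coe_units_inv, h1]
  have h3 := cfc_comp_inv (R := ℝ) f hu.unit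
    (hf := by rw [h1]; exact continuousOn_spectrum_image f A _)
    (ha := by rw [h1]; exact hsa)
  rw [h1, h2] at h3
  exact h3.symm

end Eig
section Pointwise

variable {k : ℕ}

local notation "MK" => Matrix (Fin k) (Fin k) ℂ
local notation "MK2" => Matrix (Fin k × Fin k) (Fin k × Fin k) ℂ

lemma kronecker_sub' (A B C : MK) : A ⊗ₖ (B - C) = A ⊗ₖ B - A ⊗ₖ C := by
  ext ⟨i, j⟩ ⟨p, q⟩
  simp [Matrix.kroneckerMap_apply, Matrix.sub_apply, mul_sub]

lemma sub_kronecker' (A B C : MK) : (A - B) ⊗ₖ C = A ⊗ₖ C - B ⊗ₖ C := by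
  ext ⟨i, j⟩ ⟨p, q⟩
  simp [Matrix.kroneckerMap_apply, Matrix.sub_apply, sub_mul]

lemma smul_kronecker_real (r : ℝ) (A B : MK) : (r • A) ⊗ₖ B = r • (A ⊗ₖ B) := by
  ext ⟨i, j⟩ ⟨p, q⟩
  simp only [Matrix.kroneckerMap_apply, Matrix.smul_apply]
  rw [smul_mul_assoc]

lemma kantorovich_scalar {α β v x : ℝ} (hα : 0 < α) (hαβ : α ≤ β)
    (hv : v ∈ Set.Icc α β) (hx : x ∈ Set.Icc α β) :
    v * x⁻¹ + v⁻¹ * x ≤ (α^2 + β^2) / (α * β) := by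
  obtain ⟨hv1, hv2⟩ := hv; obtain ⟨hx1, hx2⟩ := hx
  have hv0 : 0 < v := lt_of_lt_of_le hα hv1
  have hx0 : 0 < x := lt_of_lt_of_le hα hx1
  have key : 0 ≤ (β * v - α * x) * (β * x - α * v) :=
    mul_nonneg (by nlinarith) (by nlinarith)
  have heq : v * x⁻¹ + v⁻¹ * x = (v^2 + x^2) / (v * x) := by
    field_simp
  rw [heq, div_le_div_iff₀ (mul_pos hv0 hx0) (mul_pos hα (lt_of_lt_of_le hα hαβ))]
  nlinarith [key]

lemma diagonal_coe_sub {ι : Type*} [DecidableEq ι] (d e : ι → ℝ) :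
    (Matrix.diagonal (fun i => ((d i - e i : ℝ) : ℂ)) : Matrix ι ι ℂ) =
      Matrix.diagonal (fun i => (d i : ℂ)) - Matrix.diagonal (fun i => (e i : ℂ)) := by
  ext i j
  by_cases h : i = j
  · subst h
    simp only [Matrix.diagonal_apply_eq, Matrix.sub_apply]
    push_cast
    ring
  · simp [Matrix.diagonal_apply_ne _ h, Matrix.sub_apply]

lemma sandwich_psd {S M : MK} (hS : S.IsHermitian) (hM : M.PosSemidef) :
    (S * M * S).PosSemidef := by
  have := hM.mul_mul_conjTranspose_same S
  rwa [hS.eq] at this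

lemma conj_diag_psd (U : MK) (d : Fin k → ℝ) (hd : ∀ i, 0 ≤ d i) :
    (U * Matrix.diagonal (fun i => (d i : ℂ)) * Uᴴ).PosSemidef := by
  refine Matrix.PosSemidef.mul_mul_conjTranspose_same ?_ U
  refine Matrix.PosSemidef.diagonal ?_
  intro i
  exact Complex.zero_le_real.mpr (hd i)

lemma unitary_kron {U V : MK} (hU : U * Uᴴ = 1) (hV : V * Vᴴ = 1) :
    (U ⊗ₖ V) * (U ⊗ₖ V)ᴴ = (1 : MK2) := by
  rw [kron_conjTranspose, ← Matrix.mul_kronecker_mul, hU, hV, Matrix.one_kronecker_one]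

lemma core_psd (α β : ℝ) (hα : 0 < α) (hαβ : α ≤ β)
    {U V : MK} (hU : U * Uᴴ = 1) (hV : V * Vᴴ = 1)
    (v x : Fin k → ℝ) (hv : ∀ i, v i ∈ Set.Icc α β) (hx : ∀ i, x i ∈ Set.Icc α β) :
    ((((α^2 + β^2) / (α * β) : ℝ)) • (1 : MK2)
      - (U * Matrix.diagonal (fun i => (v i : ℂ)) * Uᴴ) ⊗ₖ
          (V * Matrix.diagonal (fun i => (((x i)⁻¹ : ℝ) : ℂ)) * Vᴴ)
      - (U * Matrix.diagonal (fun i => (((v i)⁻¹ : ℝ) : ℂ)) * Uᴴ) ⊗ₖ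
          (V * Matrix.diagonal (fun i => (x i : ℂ)) * Vᴴ)).PosSemidef := by
  set c : ℝ := (α^2 + β^2) / (α * β) with hc
  set Q : MK2 := U ⊗ₖ V with hQ
  have hQu : Q * Qᴴ = 1 := unitary_kron hU hV
  set bigd : Fin k × Fin k → ℝ := fun p => c - v p.1 * (x p.2)⁻¹ - (v p.1)⁻¹ * x p.2 with hbigd
  have hbig_nonneg : ∀ p, 0 ≤ bigd p := by
    intro p
    have := kantorovich_scalar hα hαβ (hv p.1) (hx p.2)
    simp only [hbigd]
    linarith
  have hsplit : (Matrix.diagonal (fun p => (bigd p : ℂ)) : MK2)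
      = c • (1 : MK2)
        - Matrix.diagonal (fun p : Fin k × Fin k => ((v p.1 * (x p.2)⁻¹ : ℝ) : ℂ))
        - Matrix.diagonal (fun p : Fin k × Fin k => (((v p.1)⁻¹ * x p.2 : ℝ) : ℂ)) := by
    ext i j
    by_cases h : i = j
    · subst h
      simp only [Matrix.diagonal_apply_eq, Matrix.sub_apply, Matrix.smul_apply,
        Matrix.one_apply_eq, hbigd, Complex.real_smul, mul_one]
      push_cast
      ring
    · simp [Matrix.diagonal_apply_ne _ h, Matrix.sub_apply,
        Matrix.one_apply_ne h]
  have e1 : Q * (c • (1 : MK2)) * Qᴴ = c • (1 : MK2) := by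
    rw [mul_smul_comm, mul_one, smul_mul_assoc, hQu]
  have hd1 : (Matrix.diagonal (fun p : Fin k × Fin k => ((v p.1 * (x p.2)⁻¹ : ℝ) : ℂ)) : MK2)
      = (Matrix.diagonal (fun i => (v i : ℂ))) ⊗ₖ
          (Matrix.diagonal (fun i => (((x i)⁻¹ : ℝ) : ℂ))) := by
    rw [Matrix.diagonal_kronecker_diagonal]
    congr 1
    funext p
    push_cast
    ring
  have hd2 : (Matrix.diagonal (fun p : Fin k × Fin k => (((v p.1)⁻¹ * x p.2 : ℝ) : ℂ)) : MK2)
      = (Matrix.diagonal (fun i => (((v i)⁻¹ : ℝ) : ℂ))) ⊗ₖ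
          (Matrix.diagonal (fun i => (x i : ℂ))) := by
    rw [Matrix.diagonal_kronecker_diagonal]
    congr 1
    funext p
    push_cast
    ring
  have e2 : Q * (Matrix.diagonal (fun p : Fin k × Fin k => ((v p.1 * (x p.2)⁻¹ : ℝ) : ℂ))) * Qᴴ
      = (U * Matrix.diagonal (fun i => (v i : ℂ)) * Uᴴ) ⊗ₖ
          (V * Matrix.diagonal (fun i => (((x i)⁻¹ : ℝ) : ℂ)) * Vᴴ) := by
    rw [hd1, hQ, kron_conjTranspose, ← Matrix.mul_kronecker_mul, ← Matrix.mul_kronecker_mul]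
  have e3 : Q * (Matrix.diagonal (fun p : Fin k × Fin k => (((v p.1)⁻¹ * x p.2 : ℝ) : ℂ))) * Qᴴ
      = (U * Matrix.diagonal (fun i => (((v i)⁻¹ : ℝ) : ℂ)) * Uᴴ) ⊗ₖ
          (V * Matrix.diagonal (fun i => (x i : ℂ)) * Vᴴ) := by
    rw [hd2, hQ, kron_conjTranspose, ← Matrix.mul_kronecker_mul, ← Matrix.mul_kronecker_mul]
  have hdecomp : Q * (Matrix.diagonal (fun p => (bigd p : ℂ)) : MK2) * Qᴴ
      = c • (1 : MK2)
        - (U * Matrix.diagonal (fun i => (v i : ℂ)) * Uᴴ) ⊗ₖ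
            (V * Matrix.diagonal (fun i => (((x i)⁻¹ : ℝ) : ℂ)) * Vᴴ)
        - (U * Matrix.diagonal (fun i => (((v i)⁻¹ : ℝ) : ℂ)) * Uᴴ) ⊗ₖ
            (V * Matrix.diagonal (fun i => (x i : ℂ)) * Vᴴ) := by
    rw [hsplit, mul_sub, sub_mul, mul_sub, sub_mul, e1, e2, e3]
  rw [← hdecomp]
  exact Matrix.PosSemidef.mul_mul_conjTranspose_same
    (Matrix.PosSemidef.diagonal fun p => Complex.zero_le_real.mpr (hbig_nonneg p)) Q

end Pointwise
section PointwiseFull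

variable {k : ℕ}

local notation "MK" => Matrix (Fin k) (Fin k) ℂ
local notation "MK2" => Matrix (Fin k × Fin k) (Fin k × Fin k) ℂ

lemma pointwise_psd (α β : ℝ) (hα : 0 < α) (hαβ : α ≤ β)
    {U V : MK} (hU : U * Uᴴ = 1) (hV : V * Vᴴ = 1)
    (v w x y : Fin k → ℝ)
    (hv : ∀ i, v i ∈ Set.Icc α β) (hx : ∀ i, x i ∈ Set.Icc α β)
    (hw : ∀ i, w i ≤ (v i)⁻¹) (hy : ∀ i, y i ≤ (x i)⁻¹)
    {W₁ W₂ : MK} (hW₁ : W₁.PosSemidef) (hW₂ : W₂.PosSemidef) :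
    ((((α^2 + β^2) / (α * β) : ℝ)) • (W₁ ⊗ₖ W₂)
      - (hW₁.sqrt * (U * Matrix.diagonal (fun i => (v i : ℂ)) * Uᴴ) * hW₁.sqrt) ⊗ₖ
          (hW₂.sqrt * (V * Matrix.diagonal (fun i => (y i : ℂ)) * Vᴴ) * hW₂.sqrt)
      - (hW₁.sqrt * (U * Matrix.diagonal (fun i => (w i : ℂ)) * Uᴴ) * hW₁.sqrt) ⊗ₖ
          (hW₂.sqrt * (V * Matrix.diagonal (fun i => (x i : ℂ)) * Vᴴ) * hW₂.sqrt)).PosSemidef := by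
  have hα' : (0:ℝ) < β := lt_of_lt_of_le hα hαβ
  set c : ℝ := (α^2 + β^2) / (α * β) with hc
  set S₁ : MK := hW₁.sqrt with hS₁def
  set S₂ : MK := hW₂.sqrt with hS₂def
  have hS₁ : S₁.IsHermitian := hW₁.posSemidef_sqrt.isHermitian
  have hS₂ : S₂.IsHermitian := hW₂.posSemidef_sqrt.isHermitian
  set Fv : MK := S₁ * (U * Matrix.diagonal (fun i => (v i : ℂ)) * Uᴴ) * S₁ with hFv
  set Gw : MK := S₁ * (U * Matrix.diagonal (fun i => (w i : ℂ)) * Uᴴ) * S₁ with hGw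
  set Vi : MK := S₁ * (U * Matrix.diagonal (fun i => (((v i)⁻¹ : ℝ) : ℂ)) * Uᴴ) * S₁ with hVi
  set Xx : MK := S₂ * (V * Matrix.diagonal (fun i => (x i : ℂ)) * Vᴴ) * S₂ with hXx
  set Yy : MK := S₂ * (V * Matrix.diagonal (fun i => (y i : ℂ)) * Vᴴ) * S₂ with hYy
  set Xi : MK := S₂ * (V * Matrix.diagonal (fun i => (((x i)⁻¹ : ℝ) : ℂ)) * Vᴴ) * S₂ with hXi
  -- pieces
  have hv0 : ∀ i, 0 ≤ v i := fun i => le_of_lt (lt_of_lt_of_le hα (hv i).1)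
  have hx0 : ∀ i, 0 ≤ x i := fun i => le_of_lt (lt_of_lt_of_le hα (hx i).1)
  have hP1 : (Fv ⊗ₖ (Xi - Yy)).PosSemidef := by
    have hXiY : Xi - Yy
        = S₂ * (V * Matrix.diagonal (fun i => (((x i)⁻¹ - y i : ℝ) : ℂ)) * Vᴴ) * S₂ := by
      rw [diagonal_coe_sub]
      rw [hXi, hYy]
      simp only [mul_sub, sub_mul]
    rw [hXiY]
    refine PosSemidef.kron ?_ ?_
    · exact sandwich_psd hS₁ (conj_diag_psd U v hv0)
    · exact sandwich_psd hS₂ (conj_diag_psd V _ (fun i => sub_nonneg.mpr (hy i)))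
  have hP2 : ((Vi - Gw) ⊗ₖ Xx).PosSemidef := by
    have hViG : Vi - Gw
        = S₁ * (U * Matrix.diagonal (fun i => (((v i)⁻¹ - w i : ℝ) : ℂ)) * Uᴴ) * S₁ := by
      rw [diagonal_coe_sub]
      rw [hVi, hGw]
      simp only [mul_sub, sub_mul]
    rw [hViG]
    refine PosSemidef.kron ?_ ?_
    · exact sandwich_psd hS₁ (conj_diag_psd U _ (fun i => sub_nonneg.mpr (hw i)))
    · exact sandwich_psd hS₂ (conj_diag_psd V x hx0)
  -- the core piece
  have hQH : (S₁ ⊗ₖ S₂)ᴴ = S₁ ⊗ₖ S₂ := by rw [kron_conjTranspose, hS₁.eq, hS₂.eq]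
  have hP3 : (c • (W₁ ⊗ₖ W₂) - Fv ⊗ₖ Xi - Vi ⊗ₖ Xx).PosSemidef := by
    have q1 : (S₁ ⊗ₖ S₂) * (c • (1 : MK2)) * (S₁ ⊗ₖ S₂)ᴴ = c • (W₁ ⊗ₖ W₂) := by
      rw [hQH, mul_smul_comm, mul_one, smul_mul_assoc, ← Matrix.mul_kronecker_mul,
        hW₁.sqrt_mul_self, hW₂.sqrt_mul_self]
    have q2 : ∀ M₁ M₂ : MK, (S₁ ⊗ₖ S₂) * (M₁ ⊗ₖ M₂) * (S₁ ⊗ₖ S₂)ᴴ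
        = (S₁ * M₁ * S₁) ⊗ₖ (S₂ * M₂ * S₂) := by
      intro M₁ M₂
      rw [hQH, ← Matrix.mul_kronecker_mul, ← Matrix.mul_kronecker_mul]
    have hcore := core_psd α β hα hαβ hU hV v x hv hx
    have hdecomp : (S₁ ⊗ₖ S₂) *
          (c • (1 : MK2)
            - (U * Matrix.diagonal (fun i => (v i : ℂ)) * Uᴴ) ⊗ₖ
                (V * Matrix.diagonal (fun i => (((x i)⁻¹ : ℝ) : ℂ)) * Vᴴ)
            - (U * Matrix.diagonal (fun i => (((v i)⁻¹ : ℝ) : ℂ)) * Uᴴ) ⊗ₖ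
                (V * Matrix.diagonal (fun i => (x i : ℂ)) * Vᴴ)) * (S₁ ⊗ₖ S₂)ᴴ
        = c • (W₁ ⊗ₖ W₂) - Fv ⊗ₖ Xi - Vi ⊗ₖ Xx := by
      rw [mul_sub, sub_mul, mul_sub, sub_mul, q1, q2, q2, hFv, hXi, hVi, hXx]
    rw [← hdecomp]
    exact hcore.mul_mul_conjTranspose_same _
  have hiden : c • (W₁ ⊗ₖ W₂) - Fv ⊗ₖ Yy - Gw ⊗ₖ Xx
      = (c • (W₁ ⊗ₖ W₂) - Fv ⊗ₖ Xi - Vi ⊗ₖ Xx) + (Fv ⊗ₖ (Xi - Yy) + (Vi - Gw) ⊗ₖ Xx) := by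
    rw [kronecker_sub', sub_kronecker']
    abel
  rw [hiden]
  exact hP3.add (hP1.add hP2)

end PointwiseFull
section Integrals

attribute [local instance] Matrix.frobeniusNormedRing

variable {k : ℕ} {n : Type*} [Fintype n] [DecidableEq n]
variable {Ω : Type*} [MeasurableSpace Ω] {μ : Measure Ω}

local notation "MK" => Matrix (Fin k) (Fin k) ℂ
local notation "MN" => Matrix n n ℂ

noncomputable def ctCLM : MN →L[ℝ] MN :=
  LinearMap.toContinuousLinearMap
    { toFun := fun N => Nᴴ
      map_add' := fun M N => Matrix.conjTranspose_add M N
      map_smul' := fun r N => by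
        ext i j
        simp [Matrix.conjTranspose_apply, Matrix.smul_apply, Complex.real_smul] }

lemma integral_conjTranspose {M : Ω → MN} (hM : Integrable M μ) :
    (∫ t, M t ∂μ)ᴴ = ∫ t, (M t)ᴴ ∂μ := by
  have h := (ctCLM (n := n)).integral_comp_comm hM
  calc (∫ t, M t ∂μ)ᴴ = ctCLM (∫ t, M t ∂μ) := rfl
    _ = ∫ t, ctCLM (M t) ∂μ := h.symm
    _ = ∫ t, (M t)ᴴ ∂μ := rfl

noncomputable def quadCLM (xv : n → ℂ) : MN →L[ℝ] ℂ :=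
  LinearMap.toContinuousLinearMap
    { toFun := fun N => dotProduct (star xv) (N *ᵥ xv)
      map_add' := fun M N => by simp [Matrix.add_mulVec, dotProduct_add]
      map_smul' := fun r N => by
        simp [Matrix.smul_mulVec, dotProduct_smul] }

lemma integral_posSemidef {M : Ω → MN} (hM : Integrable M μ)
    (h : ∀ t, (M t).PosSemidef) : (∫ t, M t ∂μ).PosSemidef := by
  rw [posSemidef_iff_dotProduct_mulVec]
  constructor
  · show (∫ t, M t ∂μ)ᴴ = _
    rw [integral_conjTranspose hM]
    exact integral_congr_ae (Filter.Eventually.of_forall fun t => (h t).1)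
  · intro xv
    have hL := (quadCLM xv).integral_comp_comm hM
    have hφ : Integrable (fun t => quadCLM xv (M t)) μ := (quadCLM xv).integrable_comp hM
    have key : dotProduct (star xv) ((∫ t, M t ∂μ) *ᵥ xv)
        = ∫ t, quadCLM xv (M t) ∂μ := by
      exact hL.symm
    rw [key]
    have hz : ∀ t, 0 ≤ quadCLM xv (M t) := fun t => (h t).dotProduct_mulVec_nonneg xv
    rw [Complex.le_def]
    constructor
    · have h1 : (∫ t, quadCLM xv (M t) ∂μ).re = ∫ t, (quadCLM xv (M t)).re ∂μ :=
        (integral_re hφ).symm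
      rw [Complex.zero_re, h1]
      exact integral_nonneg fun t => (Complex.le_def.mp (hz t)).1
    · have h1 : (∫ t, quadCLM xv (M t) ∂μ).im = ∫ t, (quadCLM xv (M t)).im ∂μ :=
        (integral_im hφ).symm
      rw [Complex.zero_im, h1]
      rw [integral_congr_ae (Filter.Eventually.of_forall fun t =>
        ((Complex.le_def.mp (hz t)).2).symm)]
      simp

noncomputable def kronLeftCLM (X : MK) : MK →L[ℝ] Matrix (Fin k × Fin k) (Fin k × Fin k) ℂ :=
  LinearMap.toContinuousLinearMap
    { toFun := fun N => X ⊗ₖ N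
      map_add' := fun M N => Matrix.kronecker_add X M N
      map_smul' := fun r N => by
        ext ⟨i, j⟩ ⟨p, q⟩
        simp only [Matrix.kroneckerMap_apply, Matrix.smul_apply, RingHom.id_apply]
        rw [mul_smul_comm] }

noncomputable def kronRightCLM (X : MK) : MK →L[ℝ] Matrix (Fin k × Fin k) (Fin k × Fin k) ℂ :=
  LinearMap.toContinuousLinearMap
    { toFun := fun N => N ⊗ₖ X
      map_add' := fun M N => Matrix.add_kronecker M N X
      map_smul' := fun r N => by
        ext ⟨i, j⟩ ⟨p, q⟩
        simp only [Matrix.kroneckerMap_apply, Matrix.smul_apply, RingHom.id_apply]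
        rw [smul_mul_assoc] }

lemma integral_kron_left (X : MK) {M : Ω → MK} (hM : Integrable M μ) :
    ∫ t, X ⊗ₖ M t ∂μ = X ⊗ₖ ∫ t, M t ∂μ :=
  ((kronLeftCLM X).integral_comp_comm hM)

lemma integral_kron_right (X : MK) {M : Ω → MK} (hM : Integrable M μ) :
    ∫ t, M t ⊗ₖ X ∂μ = (∫ t, M t ∂μ) ⊗ₖ X :=
  ((kronRightCLM X).integral_comp_comm hM)

lemma integrable_kron_left (X : MK) {M : Ω → MK} (hM : Integrable M μ) :
    Integrable (fun t => X ⊗ₖ M t) μ :=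
  (kronLeftCLM X).integrable_comp hM

lemma integrable_kron_right (X : MK) {M : Ω → MK} (hM : Integrable M μ) :
    Integrable (fun t => M t ⊗ₖ X) μ :=
  (kronRightCLM X).integrable_comp hM

end Integrals
section Meas

attribute [local instance] Matrix.frobeniusNormedRing

variable {k : ℕ} {Ω : Type*} [MeasurableSpace Ω] {μ : Measure Ω}

local notation "MK" => Matrix (Fin k) (Fin k) ℂ

lemma norm_cfc_le' {A : MK} (hA : A.IsHermitian) (g : ℝ → ℝ) {m : ℝ} (hm : 0 ≤ m)
    (hg : ∀ i, |g (hA.eigenvalues i)| ≤ m) :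
    ‖cfc g A‖ ≤ (k:ℝ) * k * (k * m) := by
  rw [cfc_repr hA g]
  refine norm_conj_diag_le (eigU_mul_conjT hA) hm fun i => ?_
  rw [Complex.norm_real, Real.norm_eq_abs]
  exact hg i

lemma aesm_cfc {g : ℝ → ℝ} (hg : Continuous g) {M : Ω → MK}
    (hM : AEStronglyMeasurable M μ) (hMh : ∀ t, (M t).IsHermitian) :
    AEStronglyMeasurable (fun t => cfc g (M t)) μ := by
  have hpoly : ∀ n : ℕ, ∃ p : Polynomial ℝ,
      ∀ x ∈ Set.Icc (-(n+1) : ℝ) (n+1), |p.eval x - g x| < 1/(n+1) := fun n =>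
    exists_polynomial_near_of_continuousOn _ _ g hg.continuousOn _ (by positivity)
  choose p hp using hpoly
  have haesm : ∀ n : ℕ, AEStronglyMeasurable (fun t => Polynomial.aeval (M t) (p n)) μ :=
    fun n => (Polynomial.continuous_aeval (p n)).comp_aestronglyMeasurable hM
  refine aestronglyMeasurable_of_tendsto_ae Filter.atTop haesm
    (Filter.Eventually.of_forall fun t => ?_)
  -- pointwise convergence
  have hsa : IsSelfAdjoint (M t) := hMh t
  set lam := (hMh t).eigenvalues with hlam
  obtain ⟨N, hN⟩ := exists_nat_ge (∑ i, |lam i|)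
  have hbound : ∀ i, |lam i| ≤ N := fun i =>
    le_trans (Finset.single_le_sum (f := fun j => |lam j|)
      (fun j _ => abs_nonneg _) (Finset.mem_univ i)) hN
  rw [← tendsto_sub_nhds_zero_iff]
  have hle : ∀ n : ℕ, n ≥ N → ‖Polynomial.aeval (M t) (p n) - cfc g (M t)‖
      ≤ ((k:ℝ) * k * k) * (1/(n+1)) := by
    intro n hn
    have hcfc : Polynomial.aeval (M t) (p n) - cfc g (M t)
        = cfc (fun x => (p n).eval x - g x) (M t) := by
      rw [cfc_sub (fun x => (p n).eval x) g (M t)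
        (continuousOn_spectrum _ _) (continuousOn_spectrum _ _),
        cfc_polynomial (p n) (M t) hsa]
    rw [hcfc]
    have hstep : ‖cfc (fun x => (p n).eval x - g x) (M t)‖
        ≤ (k:ℝ) * k * (k * (1/(n+1))) := by
      refine norm_cfc_le' (hMh t) _ (by positivity) fun i => ?_
      have hmem : lam i ∈ Set.Icc (-(n+1) : ℝ) (n+1) := by
        have h1 := hbound i
        have h2 : (N:ℝ) ≤ n := Nat.cast_le.mpr hn
        constructor
        · nlinarith [abs_nonneg (lam i), neg_abs_le (lam i)]
        · nlinarith [le_abs_self (lam i)]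
      exact le_of_lt (hp n (lam i) hmem)
    calc ‖cfc (fun x => (p n).eval x - g x) (M t)‖
        ≤ (k:ℝ) * k * (k * (1/(n+1))) := hstep
      _ = ((k:ℝ) * k * k) * (1/(n+1)) := by ring
  refine squeeze_zero_norm' (Filter.eventually_atTop.mpr ⟨N, fun n hn => hle n hn⟩) ?_
  have h0 : Filter.Tendsto (fun n : ℕ => (1:ℝ)/(n+1)) Filter.atTop (nhds 0) :=
    tendsto_one_div_add_atTop_nhds_zero_nat
  have hfin := h0.const_mul ((k:ℝ) * k * k)
  simp only [mul_zero] at hfin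
  exact hfin

end Meas
section MoreHelpers

attribute [local instance] Matrix.frobeniusNormedRing

variable {k : ℕ} {Ω : Type*} [MeasurableSpace Ω] {μ : Measure Ω}

local notation "MK" => Matrix (Fin k) (Fin k) ℂ

lemma sqrt_eq_cfc {M : MK} (hM : M.PosSemidef) : hM.sqrt = cfc Real.sqrt M := by
  rw [hM.1.cfc_eq]
  rfl

lemma aesm_mul3 {M N P : Ω → MK} (hM : AEStronglyMeasurable M μ)
    (hN : AEStronglyMeasurable N μ) (hP : AEStronglyMeasurable P μ) :
    AEStronglyMeasurable (fun t => M t * N t * P t) μ :=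
  (hM.mul hN).mul hP

lemma sandwich_norm_bound {WW : MK} (hWW : WW.PosSemidef) {X : MK} {CX : ℝ}
    (hCX : 0 ≤ CX) (hX : ‖X‖ ≤ CX) :
    ‖hWW.sqrt * X * hWW.sqrt‖ ≤ ((k:ℝ)*k*k)^2 * k * CX * ‖WW‖ := by
  set s := Real.sqrt ((k:ℝ) * ‖WW‖) with hsdef
  have hs0 : 0 ≤ s := Real.sqrt_nonneg _
  have hs2 : s^2 = k * ‖WW‖ := Real.sq_sqrt (by positivity)
  have hSb : ‖hWW.sqrt‖ ≤ (k:ℝ)*k*(k*s) := by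
    have hrepr : hWW.sqrt = (hWW.1.eigenvectorUnitary : MK) *
        Matrix.diagonal (fun i => ((Real.sqrt (hWW.1.eigenvalues i)) : ℂ)) *
        (hWW.1.eigenvectorUnitary : MK)ᴴ := by
      rw [sqrt_eq_cfc, cfc_repr]
    rw [hrepr]
    refine norm_conj_diag_le (eigU_mul_conjT hWW.1) hs0 fun i => ?_
    rw [Complex.norm_real, Real.norm_eq_abs, abs_of_nonneg (Real.sqrt_nonneg _)]
    exact Real.sqrt_le_sqrt (eig_le_trace_bound hWW i)
  calc ‖hWW.sqrt * X * hWW.sqrt‖ ≤ ‖hWW.sqrt * X‖ * ‖hWW.sqrt‖ :=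
        Matrix.frobenius_norm_mul _ _
    _ ≤ (‖hWW.sqrt‖ * ‖X‖) * ‖hWW.sqrt‖ :=
        mul_le_mul_of_nonneg_right (Matrix.frobenius_norm_mul _ _) (norm_nonneg _)
    _ ≤ (((k:ℝ)*k*(k*s)) * CX) * ((k:ℝ)*k*(k*s)) := by
        have hb1 : ‖hWW.sqrt‖ * ‖X‖ ≤ ((k:ℝ)*k*(k*s)) * CX :=
          mul_le_mul hSb hX (norm_nonneg _) (by positivity)
        exact mul_le_mul hb1 hSb (norm_nonneg _) (by positivity)
    _ = ((k:ℝ)*k*k)^2 * CX * s^2 := by ring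
    _ = ((k:ℝ)*k*k)^2 * k * CX * ‖WW‖ := by rw [hs2]; ring

end MoreHelpers
/-- Theorem 5.1: Kantorovich type integral inequality for `f(A_t)` and `f(A_t⁻¹)`, where
`f` is continuous on `[a,b] ∪ [1/b, 1/a]`, satisfies `f(x)f(1/x) ≤ 1` on `[a,b]`, and maps
`[a,b]` into `[a,b]` or into `[1/b, 1/a]`. -/
theorem kantorovich_integral_tensor_f {k : ℕ} {Ω : Type*} [MeasurableSpace Ω]
    (μ : Measure Ω) [IsFiniteMeasure μ] (a b : ℝ) (ha : 0 < a) (hab : a ≤ b)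
    (A W : Ω → Matrix (Fin k) (Fin k) ℂ)
    (hAmeas : AEStronglyMeasurable A μ) (hWmeas : AEStronglyMeasurable W μ)
    (hAherm : ∀ t, (A t).IsHermitian)
    (hAa : ∀ t, (A t - a • 1).PosSemidef)
    (hAb : ∀ t, ((b • 1 : Matrix (Fin k) (Fin k) ℂ) - A t).PosSemidef)
    (hW : ∀ t, (W t).PosSemidef)
    (hWint : Integrable (fun t => ‖W t‖) μ)
    (f : ℝ → ℝ)
    (hf_cont : ContinuousOn f (Set.Icc a b ∪ Set.Icc (1 / b) (1 / a)))
    (hf_one : ∀ x ∈ Set.Icc a b, f x * f (1 / x) ≤ 1)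
    (hf_maps : Set.MapsTo f (Set.Icc a b) (Set.Icc a b) ∨
      Set.MapsTo f (Set.Icc a b) (Set.Icc (1 / b) (1 / a))) :
    (((a ^ 2 + b ^ 2) / (2 * a * b)) • ((∫ t, W t ∂μ) ⊗ₖ (∫ t, W t ∂μ))
      - symKron (∫ t, (hW t).sqrt * cfc f (A t) * (hW t).sqrt ∂μ)
          (∫ t, (hW t).sqrt * cfc f ((A t)⁻¹) * (hW t).sqrt ∂μ)).PosSemidef := by
  classical
  have hb : 0 < b := lt_of_lt_of_le ha hab
  have ha0 : a ≠ 0 := ne_of_gt ha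
  have hb0 : b ≠ 0 := ne_of_gt hb
  set c2 : ℝ := (a^2 + b^2) / (a * b) with hc2
  -- eigenvalues of A t lie in [a, b]
  have hlam_mem : ∀ t i, (hAherm t).eigenvalues i ∈ Set.Icc a b := fun t i =>
    ⟨eig_ge (hAherm t) (hAa t) i, eig_le (hAherm t) (hAb t) i⟩
  -- choose the interval [α, β] containing the values of f on [a,b]
  obtain ⟨α, β, hα, hαβ, hcc, hmapsf⟩ :
      ∃ α β : ℝ, 0 < α ∧ α ≤ β ∧ (α^2 + β^2)/(α*β) = c2 ∧
        (∀ z ∈ Set.Icc a b, f z ∈ Set.Icc α β) := by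
    rcases hf_maps with h | h
    · exact ⟨a, b, ha, hab, rfl, fun z hz => h hz⟩
    · refine ⟨1/b, 1/a, by positivity, one_div_le_one_div_of_le ha hab, ?_,
        fun z hz => h hz⟩
      rw [hc2]
      field_simp
  -- a uniform bound for f on the union of intervals
  have hcompact : IsCompact (Set.Icc a b ∪ Set.Icc (1/b) (1/a)) :=
    isCompact_Icc.union isCompact_Icc
  obtain ⟨C₀, hC₀⟩ := hcompact.exists_bound_of_continuousOn hf_cont
  have hC₀0 : 0 ≤ C₀ := le_trans (norm_nonneg _) (hC₀ a (Or.inl ⟨le_refl a, hab⟩))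
  have hinv_mem : ∀ z ∈ Set.Icc a b, z⁻¹ ∈ Set.Icc (1/b) (1/a) := by
    intro z hz
    have hz0 : 0 < z := lt_of_lt_of_le ha hz.1
    constructor
    · rw [← one_div]
      exact one_div_le_one_div_of_le hz0 hz.2
    · rw [← one_div]
      exact one_div_le_one_div_of_le ha hz.1
  -- clamp function and continuous extensions
  set φc : ℝ → ℝ := fun z => max a (min b z) with hφc
  have hφc_mem : ∀ z, φc z ∈ Set.Icc a b := fun z =>
    ⟨le_max_left _ _, max_le hab (min_le_left _ _)⟩
  have hφc_eq : ∀ z ∈ Set.Icc a b, φc z = z := fun z hz => by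
    rw [hφc]
    simp only
    rw [min_eq_right hz.2, max_eq_right hz.1]
  have hφc_cont : Continuous φc := continuous_const.max (continuous_const.min continuous_id)
  set f₁ : ℝ → ℝ := fun z => f (φc z) with hf₁def
  set f₂ : ℝ → ℝ := fun z => f ((φc z)⁻¹) with hf₂def
  have hf₁_cont : Continuous f₁ :=
    (hf_cont.mono Set.subset_union_left).comp_continuous hφc_cont hφc_mem
  have hf₂_cont : Continuous f₂ := by
    refine (hf_cont.mono Set.subset_union_right).comp_continuous
      (hφc_cont.inv₀ fun z => ne_of_gt (lt_of_lt_of_le ha (hφc_mem z).1))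
      (fun z => hinv_mem _ (hφc_mem z))
  -- spectra and units
  have hspec : ∀ t, spectrum ℝ (A t) ⊆ Set.Icc a b := fun t =>
    spectrum_subset_Icc (hAherm t) (fun i => (hlam_mem t i).1) (fun i => (hlam_mem t i).2)
  have hAunit : ∀ t, IsUnit (A t) := fun t =>
    isUnit_of_eig_pos (hAherm t) (fun i => lt_of_lt_of_le ha (hlam_mem t i).1)
  -- rewriting cfc's as cfc of globally continuous functions
  have hF_eq : ∀ t, cfc f (A t) = cfc f₁ (A t) := by
    intro t
    apply cfc_congr
    intro z hz
    rw [hf₁def]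
    simp only
    rw [hφc_eq z (hspec t hz)]
  have hG_eq : ∀ t, cfc f ((A t)⁻¹) = cfc f₂ (A t) := by
    intro t
    rw [cfc_matrix_inv (hAherm t) (hAunit t) f]
    apply cfc_congr
    intro z hz
    rw [hf₂def]
    simp only
    rw [hφc_eq z (hspec t hz)]
  -- measurability
  have hSmeas : AEStronglyMeasurable (fun t => (hW t).sqrt) μ := by
    have hrw : (fun t => (hW t).sqrt) = fun t => cfc Real.sqrt (W t) :=
      funext fun t => sqrt_eq_cfc (hW t)
    rw [hrw]
    exact aesm_cfc Real.continuous_sqrt hWmeas (fun t => (hW t).1)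
  have hFcfcmeas : AEStronglyMeasurable (fun t => cfc f (A t)) μ := by
    have hrw : (fun t => cfc f (A t)) = fun t => cfc f₁ (A t) := funext hF_eq
    rw [hrw]
    exact aesm_cfc hf₁_cont hAmeas hAherm
  have hGcfcmeas : AEStronglyMeasurable (fun t => cfc f ((A t)⁻¹)) μ := by
    have hrw : (fun t => cfc f ((A t)⁻¹)) = fun t => cfc f₂ (A t) := funext hG_eq
    rw [hrw]
    exact aesm_cfc hf₂_cont hAmeas hAherm
  have hFfmeas : AEStronglyMeasurable (fun t => (hW t).sqrt * cfc f (A t) * (hW t).sqrt) μ :=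
    aesm_mul3 hSmeas hFcfcmeas hSmeas
  have hGgmeas : AEStronglyMeasurable (fun t => (hW t).sqrt * cfc f ((A t)⁻¹) * (hW t).sqrt) μ :=
    aesm_mul3 hSmeas hGcfcmeas hSmeas
  -- norm bounds
  have hFcfc_bound : ∀ t, ‖cfc f (A t)‖ ≤ (k:ℝ)*k*(k*C₀) := by
    intro t
    rw [cfc_repr (hAherm t) f]
    refine norm_conj_diag_le (eigU_mul_conjT (hAherm t)) hC₀0 fun i => ?_
    rw [Complex.norm_real, Real.norm_eq_abs]
    exact hC₀ _ (Or.inl (hlam_mem t i))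
  have hGcfc_bound : ∀ t, ‖cfc f ((A t)⁻¹)‖ ≤ (k:ℝ)*k*(k*C₀) := by
    intro t
    rw [cfc_matrix_inv (hAherm t) (hAunit t) f, cfc_repr (hAherm t) (fun x => f x⁻¹)]
    refine norm_conj_diag_le (eigU_mul_conjT (hAherm t)) hC₀0 fun i => ?_
    rw [Complex.norm_real, Real.norm_eq_abs]
    exact hC₀ _ (Or.inr (hinv_mem _ (hlam_mem t i)))
  set Cb : ℝ := (k:ℝ)*k*(k*C₀) with hCb
  have hCb0 : 0 ≤ Cb := by positivity
  set Cbig : ℝ := ((k:ℝ)*k*k)^2 * k * Cb with hCbig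
  -- integrability
  have hWInt : Integrable W μ :=
    hWint.mono' hWmeas (Filter.Eventually.of_forall fun t => le_refl _)
  have hFfInt : Integrable (fun t => (hW t).sqrt * cfc f (A t) * (hW t).sqrt) μ := by
    refine (hWint.const_mul Cbig).mono' hFfmeas (Filter.Eventually.of_forall fun t => ?_)
    have := sandwich_norm_bound (hW t) hCb0 (hFcfc_bound t)
    calc ‖(hW t).sqrt * cfc f (A t) * (hW t).sqrt‖
        ≤ ((k:ℝ)*k*k)^2 * k * Cb * ‖W t‖ := this
      _ = Cbig * ‖W t‖ := by rw [hCbig]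
  have hGgInt : Integrable (fun t => (hW t).sqrt * cfc f ((A t)⁻¹) * (hW t).sqrt) μ := by
    refine (hWint.const_mul Cbig).mono' hGgmeas (Filter.Eventually.of_forall fun t => ?_)
    have := sandwich_norm_bound (hW t) hCb0 (hGcfc_bound t)
    calc ‖(hW t).sqrt * cfc f ((A t)⁻¹) * (hW t).sqrt‖
        ≤ ((k:ℝ)*k*k)^2 * k * Cb * ‖W t‖ := this
      _ = Cbig * ‖W t‖ := by rw [hCbig]
  -- abbreviations
  set Ff : Ω → Matrix (Fin k) (Fin k) ℂ :=
    fun t => (hW t).sqrt * cfc f (A t) * (hW t).sqrt with hFf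
  set Gg : Ω → Matrix (Fin k) (Fin k) ℂ :=
    fun t => (hW t).sqrt * cfc f ((A t)⁻¹) * (hW t).sqrt with hGg
  set Z : Matrix (Fin k) (Fin k) ℂ := ∫ t, W t ∂μ with hZ
  set X : Matrix (Fin k) (Fin k) ℂ := ∫ t, Ff t ∂μ with hX
  set Y : Matrix (Fin k) (Fin k) ℂ := ∫ t, Gg t ∂μ with hY
  -- the pointwise pair inequality
  have hpair : ∀ s t : Ω,
      (c2 • (W s ⊗ₖ W t) - Ff s ⊗ₖ Gg t - Gg s ⊗ₖ Ff t).PosSemidef := by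
    intro s t
    have hws : ∀ i, f ((hAherm s).eigenvalues i)⁻¹ ≤ (f ((hAherm s).eigenvalues i))⁻¹ := by
      intro i
      have h1 : 0 < f ((hAherm s).eigenvalues i) :=
        lt_of_lt_of_le hα (hmapsf _ (hlam_mem s i)).1
      have h2 := hf_one _ (hlam_mem s i)
      rw [one_div] at h2
      have hinv : f ((hAherm s).eigenvalues i) * (f ((hAherm s).eigenvalues i))⁻¹ = 1 :=
        mul_inv_cancel₀ h1.ne'
      nlinarith
    have hwt : ∀ i, f ((hAherm t).eigenvalues i)⁻¹ ≤ (f ((hAherm t).eigenvalues i))⁻¹ := by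
      intro i
      have h1 : 0 < f ((hAherm t).eigenvalues i) :=
        lt_of_lt_of_le hα (hmapsf _ (hlam_mem t i)).1
      have h2 := hf_one _ (hlam_mem t i)
      rw [one_div] at h2
      have hinv : f ((hAherm t).eigenvalues i) * (f ((hAherm t).eigenvalues i))⁻¹ = 1 :=
        mul_inv_cancel₀ h1.ne'
      nlinarith
    have hmain := pointwise_psd α β hα hαβ
      (eigU_mul_conjT (hAherm s)) (eigU_mul_conjT (hAherm t))
      (fun i => f ((hAherm s).eigenvalues i))
      (fun i => f (((hAherm s).eigenvalues i)⁻¹))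
      (fun i => f ((hAherm t).eigenvalues i))
      (fun i => f (((hAherm t).eigenvalues i)⁻¹))
      (fun i => hmapsf _ (hlam_mem s i))
      (fun i => hmapsf _ (hlam_mem t i))
      hws hwt (hW s) (hW t)
    rw [hcc] at hmain
    simp only [hFf, hGg]
    rw [cfc_matrix_inv (hAherm s) (hAunit s) f, cfc_matrix_inv (hAherm t) (hAunit t) f,
      cfc_repr (hAherm s) f, cfc_repr (hAherm t) f,
      cfc_repr (hAherm s) (fun x => f x⁻¹), cfc_repr (hAherm t) (fun x => f x⁻¹)]
    exact hmain
  -- integrate over t for fixed s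
  have hpairInt : ∀ s, Integrable
      (fun t => c2 • (W s ⊗ₖ W t) - Ff s ⊗ₖ Gg t - Gg s ⊗ₖ Ff t) μ := fun s =>
    (((integrable_kron_left (W s) hWInt).smul c2).sub
      (integrable_kron_left (Ff s) hGgInt)).sub (integrable_kron_left (Gg s) hFfInt)
  have hstep1 : ∀ s, (c2 • (W s ⊗ₖ Z) - Ff s ⊗ₖ Y - Gg s ⊗ₖ X).PosSemidef := by
    intro s
    have hI1 : Integrable (fun t => c2 • (W s ⊗ₖ W t)) μ :=
      (integrable_kron_left (W s) hWInt).smul c2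
    have hI2 : Integrable (fun t => c2 • (W s ⊗ₖ W t) - Ff s ⊗ₖ Gg t) μ :=
      hI1.sub (integrable_kron_left (Ff s) hGgInt)
    have h1 : (∫ t, (c2 • (W s ⊗ₖ W t) - Ff s ⊗ₖ Gg t - Gg s ⊗ₖ Ff t) ∂μ)
        = c2 • (W s ⊗ₖ Z) - Ff s ⊗ₖ Y - Gg s ⊗ₖ X := by
      rw [integral_sub hI2 (integrable_kron_left (Gg s) hFfInt),
        integral_sub hI1 (integrable_kron_left (Ff s) hGgInt),
        integral_smul, integral_kron_left _ hWInt, integral_kron_left _ hGgInt,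
        integral_kron_left _ hFfInt, ← hZ, ← hX, ← hY]
    rw [← h1]
    refine integral_posSemidef (hpairInt s) ?_
    exact fun t => hpair s t
  -- integrate over s
  have hIntS : Integrable (fun s => c2 • (W s ⊗ₖ Z) - Ff s ⊗ₖ Y - Gg s ⊗ₖ X) μ :=
    (((integrable_kron_right Z hWInt).smul c2).sub
      (integrable_kron_right Y hFfInt)).sub (integrable_kron_right X hGgInt)
  have hstep2 : (c2 • (Z ⊗ₖ Z) - X ⊗ₖ Y - Y ⊗ₖ X).PosSemidef := by
    have hJ1 : Integrable (fun s => c2 • (W s ⊗ₖ Z)) μ :=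
      (integrable_kron_right Z hWInt).smul c2
    have hJ2 : Integrable (fun s => c2 • (W s ⊗ₖ Z) - Ff s ⊗ₖ Y) μ :=
      hJ1.sub (integrable_kron_right Y hFfInt)
    have h2 : (∫ s, (c2 • (W s ⊗ₖ Z) - Ff s ⊗ₖ Y - Gg s ⊗ₖ X) ∂μ)
        = c2 • (Z ⊗ₖ Z) - X ⊗ₖ Y - Y ⊗ₖ X := by
      rw [integral_sub hJ2 (integrable_kron_right X hGgInt),
        integral_sub hJ1 (integrable_kron_right Y hFfInt),
        integral_smul, integral_kron_right Z hWInt, integral_kron_right Y hFfInt,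
        integral_kron_right X hGgInt, ← hZ, ← hX, ← hY]
    rw [← h2]
    refine integral_posSemidef hIntS ?_
    exact hstep1
  -- final algebra
  have hhalf : ((a ^ 2 + b ^ 2) / (2 * a * b)) • (Z ⊗ₖ Z) - symKron X Y
      = (2⁻¹ : ℝ) • (c2 • (Z ⊗ₖ Z) - X ⊗ₖ Y - Y ⊗ₖ X) := by
    rw [symKron]
    rw [real_smul_matrix ((a ^ 2 + b ^ 2) / (2 * a * b)), real_smul_matrix (2⁻¹ : ℝ),
      real_smul_matrix c2]
    rw [smul_sub, smul_sub, smul_smul, smul_add]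
    have hs1 : ((2⁻¹ : ℝ) : ℂ) * ((c2 : ℝ) : ℂ)
        = (((a ^ 2 + b ^ 2) / (2 * a * b) : ℝ) : ℂ) := by
      rw [hc2]
      push_cast
      ring
    rw [hs1]
    have hs2 : ((1 : ℂ)/2) = ((2⁻¹ : ℝ) : ℂ) := by norm_num
    rw [hs2]
    abel
  rw [hhalf]
  exact posSemidef_smul_real (by norm_num) hstep2
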